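/- Let H and H' be finite-dimensional Hopf algebras over ℂ with bijective antipodes, and let f : H' → H be an injective bialgebra homomorphism (so H' is identified with a Hopf subalgebra of H). If a positive integer n satisfies the quasi-exponent condition for H, then n satisfies the quasi-exponent condition for H'. In particular, the quasi-exponent of a Hopf subalgebra of H divides qexp(H). -/

import Mathlib

open TensorProduct

/-- The maps `T_n : H → H`: `T_0 = ι ∘ ε`, and `T_{n+1} = m ∘ (T_n ⊗ S^{-2n}) ∘ Δ`, i.e.
`T_n = m_n ∘ (Id ⊗ S⁻² ⊗ S⁻⁴ ⊗ ⋯ ⊗ S^{-2n+2}) ∘ Δ_n` where `m_n = m ∘ (m_{n-1} ⊗ Id)` and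
`Δ_n = (Δ_{n-1} ⊗ Id) ∘ Δ`.  Here `Sinv` is the inverse of the antipode. -/
noncomputable def qeT (H : Type*) [Ring H] [Bialgebra ℂ H] (Sinv : H →ₗ[ℂ] H) :
    ℕ → (H →ₗ[ℂ] H)
  | 0 => Algebra.linearMap ℂ H ∘ₗ Coalgebra.counit
  | n + 1 =>
      LinearMap.mul' ℂ H ∘ₗ TensorProduct.map (qeT H Sinv n) ((Sinv ∘ₗ Sinv) ^ n)
        ∘ₗ Coalgebra.comul

/-- A positive integer `n` satisfies the quasi-exponent condition for `H` if
`∑_{k=0}^N (-1)^k (N choose k) T_{nk} = 0` for some positive integer `N`. -/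
noncomputable def qexpCond (H : Type*) [Ring H] [Bialgebra ℂ H] (Sinv : H →ₗ[ℂ] H)
    (n : ℕ) : Prop :=
  ∃ N : ℕ, 0 < N ∧
    ∑ k ∈ Finset.range (N + 1), ((-1 : ℂ) ^ k * (N.choose k : ℂ)) • qeT H Sinv (n * k) = 0

namespace QexpAux

open Coalgebra LinearMap

variable {R : Type*} [CommRing R] {C : Type*} [AddCommGroup C] [Module R C] [Coalgebra R C]
  {A : Type*} [Ring A] [Algebra R A]

/-- Convolution product on `C →ₗ[R] A`. -/
noncomputable def conv (f g : C →ₗ[R] A) : C →ₗ[R] A :=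
  mul' R A ∘ₗ map f g ∘ₗ comul

/-- Convolution unit. -/
noncomputable def cOne : C →ₗ[R] A := Algebra.linearMap R A ∘ₗ counit

lemma mul'_assoc' :
    mul' R A ∘ₗ map (mul' R A) (.id : A →ₗ[R] A)
      = mul' R A ∘ₗ map (.id : A →ₗ[R] A) (mul' R A)
          ∘ₗ (TensorProduct.assoc R A A A).toLinearMap := by
  apply TensorProduct.ext_threefold
  intro x y z
  simp [mul_assoc]

lemma conv_assoc (f g h : C →ₗ[R] A) : conv (conv f g) h = conv f (conv g h) := by
  have h1 : map (mul' R A ∘ₗ map f g ∘ₗ comul) h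
      = map (mul' R A) (.id : A →ₗ[R] A) ∘ₗ map (map f g) h ∘ₗ map comul (.id : C →ₗ[R] C) := by
    rw [← map_comp, ← map_comp]; simp
  have h2 : map f (mul' R A ∘ₗ map g h ∘ₗ comul)
      = map (.id : A →ₗ[R] A) (mul' R A) ∘ₗ map f (map g h) ∘ₗ map (.id : C →ₗ[R] C) comul := by
    rw [← map_comp, ← map_comp]; simp
  ext x
  simp only [conv, comp_apply, h1, h2]
  have e := LinearMap.congr_fun (mul'_assoc' (R := R) (A := A))
    ((map (map f g) h) ((map comul (.id : C →ₗ[R] C)) (comul x)))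
  simp only [comp_apply, LinearEquiv.coe_coe] at e
  rw [e, ← map_map_assoc]
  have key : (TensorProduct.assoc R C C C) ((map comul (.id : C →ₗ[R] C)) (comul x))
      = (map (.id : C →ₗ[R] C) comul) (comul x) := by
    simpa [rTensor, lTensor] using Coalgebra.coassoc_apply (R := R) x
  rw [key]

lemma conv_cOne_left (f : C →ₗ[R] A) : conv cOne f = f := by
  have h1 : map (cOne : C →ₗ[R] A) f
      = map (Algebra.linearMap R A) f ∘ₗ rTensor C counit := by
    rw [show rTensor C counit = map counit (.id : C →ₗ[R] C) from rfl, ← map_comp, comp_id, cOne]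
  ext x
  simp only [conv, comp_apply, h1]
  rw [show (rTensor C counit) (comul x) = (1:R) ⊗ₜ[R] x from Coalgebra.rTensor_counit_comul x]
  simp [Algebra.linearMap_apply, LinearMap.mul'_apply]

lemma conv_cOne_right (f : C →ₗ[R] A) : conv f cOne = f := by
  have h1 : map f (cOne : C →ₗ[R] A)
      = map f (Algebra.linearMap R A) ∘ₗ lTensor C counit := by
    rw [show lTensor C counit = map (.id : C →ₗ[R] C) counit from rfl, ← map_comp, comp_id, cOne]
  ext x
  simp only [conv, comp_apply, h1]
  rw [show (lTensor C counit) (comul x) = x ⊗ₜ[R] (1:R) from Coalgebra.lTensor_counit_comul x]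
  simp [Algebra.linearMap_apply, LinearMap.mul'_apply]

lemma conv_unique {a b c : C →ₗ[R] A} (hca : conv c a = cOne) (hab : conv a b = cOne) :
    c = b := by
  have := conv_assoc c a b
  rw [hca, conv_cOne_left, hab, conv_cOne_right] at this
  exact this.symm

lemma conv_add_right (f g h : C →ₗ[R] A) : conv f (g + h) = conv f g + conv f h := by
  simp only [conv]
  rw [TensorProduct.map_add_right]
  ext x; simp

lemma conv_smul_right (r : R) (f g : C →ₗ[R] A) : conv f (r • g) = r • conv f g := by
  simp only [conv]
  rw [TensorProduct.map_smul_right]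
  ext x; simp


section Hopf

variable {R : Type*} [CommRing R] {H : Type*} [Ring H] [HopfAlgebra R H]

local notation "S" => HopfAlgebra.antipode (R := R) (A := H)
local notation "Δ" => (Coalgebra.comul : H →ₗ[R] H ⊗[R] H)
local notation "ε" => (Coalgebra.counit : H →ₗ[R] R)

lemma conv_antipode_id : conv (R := R) (C := H) (A := H) S .id = cOne := by
  have : map (S) (.id : H →ₗ[R] H) = LinearMap.rTensor H S := rfl
  rw [conv, this, cOne]
  exact HopfAlgebra.mul_antipode_rTensor_comul

lemma conv_id_antipode : conv (R := R) (C := H) (A := H) .id S = cOne := by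
  have : map (.id : H →ₗ[R] H) (S) = LinearMap.lTensor H S := rfl
  rw [conv, this, cOne]
  exact HopfAlgebra.mul_antipode_lTensor_comul

/-- `ε ∘ S = ε`. -/
lemma counit_comp_antipode : ε ∘ₗ S = ε := by
  -- In `Conv(H, R)`, `cOne = ε` and `(ε∘S) ⋆ ε = cOne`.
  have hone : (cOne : H →ₗ[R] R) = ε := by
    ext x; simp [cOne, Algebra.linearMap_apply, Algebra.algebraMap_self_apply]
  have hcounit_mul' : (ε) ∘ₗ mul' R H = mul' R R ∘ₗ map (ε) (ε) := by
    apply TensorProduct.ext'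
    intro x y
    simp [LinearMap.mul'_apply]
  have key : conv (R := R) (C := H) (A := R) ((ε) ∘ₗ S) (ε) = cOne := by
    have : conv (R := R) (C := H) (A := R) ((ε) ∘ₗ S) (ε)
        = (ε) ∘ₗ (mul' R H ∘ₗ LinearMap.rTensor H S ∘ₗ Δ) := by
      rw [conv]
      have hmap : map ((ε) ∘ₗ S) (ε) = map (ε) (ε) ∘ₗ LinearMap.rTensor H S := by
        rw [show LinearMap.rTensor H S = map S (.id : H →ₗ[R] H) from rfl, ← map_comp, comp_id]
      rw [hmap]
      ext x
      simp only [comp_apply]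
      rw [← comp_apply (mul' R R) (map (ε) (ε)), ← hcounit_mul']
      simp
    rw [this, HopfAlgebra.mul_antipode_rTensor_comul, hone]
    ext x
    simp [cOne, Algebra.linearMap_apply, Algebra.algebraMap_self_apply]
  -- since ε = cOne is the unit, εS ⋆ 1 = 1 gives εS = 1 = ε
  rw [← hone, conv_cOne_right] at key
  rw [← hone]; exact key

end Hopf

section TensorStructural

variable {M N P Q M' N' P' : Type*}
  [AddCommGroup M] [AddCommGroup N] [AddCommGroup P] [AddCommGroup Q]
  [AddCommGroup M'] [AddCommGroup N'] [AddCommGroup P']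
  [Module R M] [Module R N] [Module R P] [Module R Q]
  [Module R M'] [Module R N'] [Module R P']

lemma leftComm_nat (f : M →ₗ[R] M') (g : N →ₗ[R] N') (h : P →ₗ[R] P') :
    (TensorProduct.leftComm R M' N' P').toLinearMap ∘ₗ map f (map g h)
      = map g (map f h) ∘ₗ (TensorProduct.leftComm R M N P).toLinearMap := by
  ext x y z
  simp [TensorProduct.leftComm_tmul]

end TensorStructural

variable (R) in
/-- `mul'` of a tensor-product algebra, in terms of the factors. -/
lemma mul'_tensorProduct {A B : Type*} [Ring A] [Ring B] [Algebra R A] [Algebra R B] :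
    (mul' R (A ⊗[R] B) : (A ⊗[R] B) ⊗[R] (A ⊗[R] B) →ₗ[R] A ⊗[R] B)
      = map (mul' R A) (mul' R B)
          ∘ₗ (TensorProduct.tensorTensorTensorComm R A B A B).toLinearMap := by
  apply TensorProduct.ext_fourfold'
  intro a b c d
  simp [LinearMap.mul'_apply, Algebra.TensorProduct.tmul_mul_tmul,
    TensorProduct.tensorTensorTensorComm_tmul]

section Hopf2

variable {H : Type*} [Ring H] [HopfAlgebra R H]

local notation "S" => HopfAlgebra.antipode (R := R) (A := H)
local notation "Δ" => (Coalgebra.comul : H →ₗ[R] H ⊗[R] H)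
local notation "ε" => (Coalgebra.counit : H →ₗ[R] R)
local notation "ι" => Algebra.linearMap R H

/-- comul is multiplicative, as a composition of maps. -/
lemma comul_comp_mul' :
    mul' R (H ⊗[R] H) ∘ₗ map Δ Δ = Δ ∘ₗ mul' R H := by
  apply TensorProduct.ext'
  intro x y
  simp [LinearMap.mul'_apply, Bialgebra.comul_mul]

/-- `Δ ⋆ (Δ ∘ S) = 1` in `Conv(H, H ⊗ H)`. -/
lemma conv_comul_comulAntipode :
    conv (R := R) (C := H) (A := H ⊗[R] H) Δ (Δ ∘ₗ S) = cOne := by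
  have h1 : map Δ (Δ ∘ₗ S) = map Δ Δ ∘ₗ lTensor H S := by
    rw [show lTensor H S = map (.id : H →ₗ[R] H) S from rfl, ← map_comp, comp_id]
  rw [conv, h1]
  have : mul' R (H ⊗[R] H) ∘ₗ (map Δ Δ ∘ₗ lTensor H S) ∘ₗ Δ
      = Δ ∘ₗ (mul' R H ∘ₗ lTensor H S ∘ₗ Δ) := by
    ext x
    simp only [comp_apply]
    rw [← comp_apply (mul' R (H ⊗[R] H)) (map Δ Δ), comul_comp_mul']
    simp
  rw [this, HopfAlgebra.mul_antipode_lTensor_comul]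
  ext x
  simp [cOne, Algebra.linearMap_apply]

/-- The twisted antipode map `ν̃ = comm ∘ (S ⊗ S) ∘ Δ`. -/
noncomputable def nuTilde : H →ₗ[R] H ⊗[R] H :=
  (TensorProduct.comm R H H).toLinearMap ∘ₗ map S S ∘ₗ Δ

/-- `ν̃ ⋆ Δ = 1` in `Conv(H, H ⊗ H)`. -/
lemma conv_nuTilde_comul :
    conv (R := R) (C := H) (A := H ⊗[R] H) (nuTilde) Δ = cOne := by
  classical
  -- A = mul' ∘ (S ⊗ id), so that A ∘ Δ = ι ∘ ε
  set A : H ⊗[R] H →ₗ[R] H := mul' R H ∘ₗ rTensor H S with hA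
  have hAΔ : A ∘ₗ Δ = ι ∘ₗ ε := by
    rw [hA, comp_assoc]
    exact HopfAlgebra.mul_antipode_rTensor_comul
  -- step 1: split the map
  have h1 : map (nuTilde : H →ₗ[R] H ⊗[R] H) Δ
      = map ((TensorProduct.comm R H H).toLinearMap ∘ₗ map S S) (.id : H ⊗[R] H →ₗ[R] H ⊗[R] H)
          ∘ₗ map Δ Δ := by
    rw [nuTilde, ← map_comp, id_comp, comp_assoc]
  -- step 2: Δ⁴ chain
  have h2 : map Δ Δ ∘ₗ Δ
      = (lTensor (H ⊗[R] H) Δ) ∘ₗ (rTensor H Δ) ∘ₗ Δ := by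
    rw [← comp_assoc, lTensor_comp_rTensor]
  have h3 : (rTensor H Δ) ∘ₗ Δ
      = (TensorProduct.assoc R H H H).symm.toLinearMap ∘ₗ (lTensor H Δ) ∘ₗ Δ :=
    Coalgebra.coassoc_symm.symm
  have h4 : (lTensor (H ⊗[R] H) Δ) ∘ₗ (TensorProduct.assoc R H H H).symm.toLinearMap
      = (TensorProduct.assoc R H H (H ⊗[R] H)).symm.toLinearMap
          ∘ₗ lTensor H (lTensor H Δ) := by
    ext x y z
    simp
  have h5 : (lTensor H Δ) ∘ₗ Δ
      = (TensorProduct.assoc R H H H).toLinearMap ∘ₗ (rTensor H Δ) ∘ₗ Δ :=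
    Coalgebra.coassoc.symm
  -- the structural prefix
  have hSTR : (TensorProduct.tensorTensorTensorComm R H H H H).toLinearMap
        ∘ₗ map ((TensorProduct.comm R H H).toLinearMap ∘ₗ map S S)
            (.id : H ⊗[R] H →ₗ[R] H ⊗[R] H)
        ∘ₗ (TensorProduct.assoc R H H (H ⊗[R] H)).symm.toLinearMap
        ∘ₗ lTensor H (TensorProduct.assoc R H H H).toLinearMap
      = map (rTensor H S) (rTensor H S)
          ∘ₗ (TensorProduct.leftComm R H (H ⊗[R] H) H).toLinearMap := by
    ext x1 x2 x3 x4
    simp [TensorProduct.tensorTensorTensorComm_tmul, TensorProduct.leftComm_tmul]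
  -- naturality of leftComm
  have h6 : (TensorProduct.leftComm R H (H ⊗[R] H) H).toLinearMap
        ∘ₗ lTensor H (rTensor H Δ)
      = map Δ (map (.id : H →ₗ[R] H) (.id : H →ₗ[R] H))
          ∘ₗ (TensorProduct.leftComm R H H H).toLinearMap := by
    have := leftComm_nat (R := R) (.id : H →ₗ[R] H) Δ (.id : H →ₗ[R] H)
    simpa [lTensor, rTensor] using this
  have h7 : map (ε) (.id : H ⊗[R] H →ₗ[R] H ⊗[R] H)
        ∘ₗ (TensorProduct.leftComm R H H H).toLinearMap
      = (TensorProduct.leftComm R H R H).toLinearMap ∘ₗ lTensor H (rTensor H (ε)) := by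
    have := leftComm_nat (R := R) (.id : H →ₗ[R] H) (ε) (.id : H →ₗ[R] H)
    simpa [lTensor, rTensor] using this.symm
  have h8 : (TensorProduct.leftComm R H R H).toLinearMap
        ∘ₗ lTensor H ((TensorProduct.mk R R H) 1)
      = (TensorProduct.mk R R (H ⊗[R] H)) 1 := by
    ext a c
    simp [TensorProduct.leftComm_tmul]
  ext x
  rw [conv, cOne]
  simp only [comp_apply]
  have e1 := LinearMap.congr_fun h1 (Coalgebra.comul x)
  simp only [comp_apply] at e1
  rw [e1]
  have e2 := LinearMap.congr_fun h2 x
  simp only [comp_apply] at e2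
  rw [e2]
  have e3 := LinearMap.congr_fun h3 x
  simp only [comp_apply, LinearEquiv.coe_coe] at e3
  rw [e3]
  have e4 := LinearMap.congr_fun h4 ((lTensor H Δ) (Coalgebra.comul x))
  simp only [comp_apply, LinearEquiv.coe_coe] at e4
  rw [e4]
  -- merge the two lTensors and use coassoc inside
  have eMerge : (lTensor H (lTensor H Δ)) ((lTensor H Δ) (Coalgebra.comul x))
      = (lTensor H ((lTensor H Δ) ∘ₗ Δ)) (Coalgebra.comul x) := by
    rw [lTensor_comp]; simp
  rw [eMerge]
  rw [h5]
  have eSplit : (lTensor H ((TensorProduct.assoc R H H H).toLinearMap ∘ₗ rTensor H Δ ∘ₗ Δ))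
        (Coalgebra.comul x)
      = (lTensor H (TensorProduct.assoc R H H H).toLinearMap)
          ((lTensor H (rTensor H Δ)) ((lTensor H Δ) (Coalgebra.comul x))) := by
    rw [lTensor_comp, lTensor_comp]; simp
  rw [eSplit]
  have eMul := LinearMap.congr_fun (mul'_tensorProduct R (A := H) (B := H))
    ((map ((TensorProduct.comm R H H).toLinearMap ∘ₗ map S S)
      (.id : H ⊗[R] H →ₗ[R] H ⊗[R] H))
      ((TensorProduct.assoc R H H (H ⊗[R] H)).symm
        ((lTensor H (TensorProduct.assoc R H H H).toLinearMap)
          ((lTensor H (rTensor H Δ)) ((lTensor H Δ) (Coalgebra.comul x))))))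
  simp only [comp_apply, LinearEquiv.coe_coe] at eMul
  rw [eMul]
  have eSTR : (TensorProduct.tensorTensorTensorComm R H H H H)
        ((map ((TensorProduct.comm R H H).toLinearMap ∘ₗ map S S)
          (.id : H ⊗[R] H →ₗ[R] H ⊗[R] H))
          ((TensorProduct.assoc R H H (H ⊗[R] H)).symm
            ((lTensor H (TensorProduct.assoc R H H H).toLinearMap)
              ((lTensor H (rTensor H Δ)) ((lTensor H Δ) (Coalgebra.comul x))))))
        = (map (rTensor H S) (rTensor H S))
            ((TensorProduct.leftComm R H (H ⊗[R] H) H)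
              ((lTensor H (rTensor H Δ)) ((lTensor H Δ) (Coalgebra.comul x)))) := by
    simpa only [comp_apply, LinearEquiv.coe_coe] using LinearMap.congr_fun hSTR
      ((lTensor H (rTensor H Δ)) ((lTensor H Δ) (Coalgebra.comul x)))
  rw [eSTR]
  have eLC : (TensorProduct.leftComm R H (H ⊗[R] H) H)
        ((lTensor H (rTensor H Δ)) ((lTensor H Δ) (Coalgebra.comul x)))
        = (map Δ (map (.id : H →ₗ[R] H) (.id : H →ₗ[R] H)))
            ((TensorProduct.leftComm R H H H) ((lTensor H Δ) (Coalgebra.comul x))) := by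
    simpa only [comp_apply, LinearEquiv.coe_coe] using LinearMap.congr_fun h6
      ((lTensor H Δ) (Coalgebra.comul x))
  rw [eLC]
  simp only [map_id]
  -- now contract:  (map mul' mul') ((map rTS rTS) (map Δ id y)) = map (A∘Δ) A y
  have eAA : (map (mul' R H) (mul' R H))
        ((map (rTensor H S) (rTensor H S))
          ((map Δ (.id : H ⊗[R] H →ₗ[R] H ⊗[R] H))
            ((TensorProduct.leftComm R H H H) ((lTensor H Δ) (Coalgebra.comul x)))))
        = (map (A ∘ₗ Δ) A)
            ((TensorProduct.leftComm R H H H) ((lTensor H Δ) (Coalgebra.comul x))) := by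
    have eAA' : map (A ∘ₗ Δ) A = (map (mul' R H) (mul' R H) ∘ₗ map (rTensor H S) (rTensor H S))
          ∘ₗ map Δ (.id : H ⊗[R] H →ₗ[R] H ⊗[R] H) := by
      rw [← map_comp, ← map_comp, hA]; simp
    rw [eAA']
    simp only [comp_apply]
  rw [eAA]
  rw [hAΔ]
  have eIota : map ((ι) ∘ₗ (ε)) A
      = map (ι) A ∘ₗ map (ε) (.id : H ⊗[R] H →ₗ[R] H ⊗[R] H) := by
    rw [← map_comp]; simp
  rw [eIota]
  simp only [comp_apply]
  have eEps : (map (ε) (.id : H ⊗[R] H →ₗ[R] H ⊗[R] H))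
        ((TensorProduct.leftComm R H H H) ((lTensor H Δ) (Coalgebra.comul x)))
        = (TensorProduct.leftComm R H R H)
            ((lTensor H (rTensor H (ε))) ((lTensor H Δ) (Coalgebra.comul x))) := by
    simpa only [comp_apply, LinearEquiv.coe_coe] using LinearMap.congr_fun h7
      ((lTensor H Δ) (Coalgebra.comul x))
  rw [eEps]
  have e9 : (lTensor H (rTensor H (ε))) ((lTensor H Δ) (Coalgebra.comul x))
      = (lTensor H ((TensorProduct.mk R R H) 1)) (Coalgebra.comul x) := by
    have e9' : lTensor H (rTensor H (ε)) ∘ₗ lTensor H Δ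
        = lTensor H ((TensorProduct.mk R R H) 1) := by
      rw [← lTensor_comp, Coalgebra.rTensor_counit_comp_comul]
    simpa only [comp_apply] using LinearMap.congr_fun e9' (Coalgebra.comul x)
  rw [e9]
  have eFin : (TensorProduct.leftComm R H R H)
        ((lTensor H ((TensorProduct.mk R R H) 1)) (Coalgebra.comul x))
      = (1 : R) ⊗ₜ[R] (Coalgebra.comul x) := by
    simpa only [comp_apply, LinearEquiv.coe_coe, TensorProduct.mk_apply]
      using LinearMap.congr_fun h8 (Coalgebra.comul x)
  rw [eFin]
  rw [TensorProduct.map_tmul]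
  have eAD := LinearMap.congr_fun hAΔ x
  simp only [comp_apply] at eAD
  rw [eAD]
  simp [Algebra.linearMap_apply, Algebra.TensorProduct.one_def,
    Algebra.algebraMap_eq_smul_one, TensorProduct.tmul_smul, TensorProduct.smul_tmul']

/-- The antipode is an anti-coalgebra morphism. -/
lemma comul_comp_antipode :
    Δ ∘ₗ S = (TensorProduct.comm R H H).toLinearMap ∘ₗ map S S ∘ₗ Δ :=
  (conv_unique conv_nuTilde_comul conv_comul_comulAntipode).symm

section SinvFacts

variable (Sinv : H →ₗ[R] H)
  (hS₁ : Sinv ∘ₗ HopfAlgebra.antipode (R := R) (A := H) = LinearMap.id)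
  (hS₂ : HopfAlgebra.antipode (R := R) (A := H) ∘ₗ Sinv = LinearMap.id)

include hS₁ hS₂

lemma counit_comp_sinv : (ε) ∘ₗ Sinv = ε := by
  conv_lhs => rw [← counit_comp_antipode (R := R) (H := H), comp_assoc, hS₂, comp_id]

omit [Ring H] [HopfAlgebra R H] hS₁ hS₂ in
lemma comm_comm_eq {M N : Type*} [AddCommGroup M] [AddCommGroup N] [Module R M] [Module R N]
    (u : M ⊗[R] N) : (TensorProduct.comm R N M) ((TensorProduct.comm R M N) u) = u := by
  induction u using TensorProduct.induction_on with
  | zero => simp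
  | tmul a b => simp
  | add a b ha hb => simp [ha, hb]

lemma comul_comp_sinv :
    Δ ∘ₗ Sinv = map Sinv Sinv ∘ₗ (TensorProduct.comm R H H).toLinearMap ∘ₗ Δ := by
  ext x
  simp only [comp_apply, LinearEquiv.coe_coe]
  have h1 : ∀ y : H, (TensorProduct.comm R H H) (map S S (Coalgebra.comul y))
      = Coalgebra.comul ((S) y) := by
    intro y
    have h := LinearMap.congr_fun (comul_comp_antipode (R := R) (H := H)) y
    simp only [comp_apply, LinearEquiv.coe_coe] at h
    rw [h]
  have hSx : (S) (Sinv x) = x := by simpa using LinearMap.congr_fun hS₂ x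
  have hSinvS : ∀ u : H ⊗[R] H, map Sinv Sinv (map S S u) = u := by
    intro u
    induction u using TensorProduct.induction_on with
    | zero => simp
    | tmul a b =>
        simp only [map_tmul]
        rw [show Sinv ((S) a) = a from by simpa using LinearMap.congr_fun hS₁ a,
          show Sinv ((S) b) = b from by simpa using LinearMap.congr_fun hS₁ b]
    | add u v hu hv => simp [hu, hv]
  calc Coalgebra.comul (Sinv x)
      = map Sinv Sinv (map S S (Coalgebra.comul (Sinv x))) := (hSinvS _).symm
    _ = map Sinv Sinv ((TensorProduct.comm R H H) ((TensorProduct.comm R H H)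
          (map S S (Coalgebra.comul (Sinv x))))) := by rw [comm_comm_eq]
    _ = map Sinv Sinv ((TensorProduct.comm R H H) (Coalgebra.comul ((S) (Sinv x)))) := by
          rw [h1]
    _ = map Sinv Sinv ((TensorProduct.comm R H H) (Coalgebra.comul x)) := by rw [hSx]

lemma comul_comp_sq :
    Δ ∘ₗ (Sinv ∘ₗ Sinv) = map (Sinv ∘ₗ Sinv) (Sinv ∘ₗ Sinv) ∘ₗ Δ := by
  have h := comul_comp_sinv (R := R) (H := H) Sinv hS₁ hS₂
  have hx := fun y => LinearMap.congr_fun h y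
  simp only [comp_apply, LinearEquiv.coe_coe] at hx
  ext x
  simp only [comp_apply]
  rw [hx, hx]
  generalize (Coalgebra.comul x : H ⊗[R] H) = u
  induction u using TensorProduct.induction_on with
  | zero => simp
  | tmul a b => simp
  | add u v hu hv => simp only [map_add, hu, hv]

lemma counit_comp_sq : (ε) ∘ₗ (Sinv ∘ₗ Sinv) = ε := by
  rw [← comp_assoc, counit_comp_sinv (R := R) Sinv hS₁ hS₂,
    counit_comp_sinv (R := R) Sinv hS₁ hS₂]

lemma comul_comp_Ssq :
    Δ ∘ₗ ((S) ∘ₗ (S) : H →ₗ[R] H)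
      = map ((S) ∘ₗ (S) : H →ₗ[R] H) ((S) ∘ₗ (S) : H →ₗ[R] H) ∘ₗ Δ := by
  have hx := fun y => LinearMap.congr_fun (comul_comp_antipode (R := R) (H := H)) y
  simp only [comp_apply, LinearEquiv.coe_coe] at hx
  ext x
  simp only [comp_apply]
  rw [hx, hx]
  generalize (Coalgebra.comul x : H ⊗[R] H) = u
  induction u using TensorProduct.induction_on with
  | zero => simp
  | tmul a b => simp
  | add u v hu hv => simp only [map_add, hu, hv]

end SinvFacts

section ConvComp

variable {q : H →ₗ[R] H}

lemma conv_comp_coalgMap (hq : Δ ∘ₗ q = map q q ∘ₗ Δ) (f g : H →ₗ[R] H) :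
    conv f g ∘ₗ q = conv (f ∘ₗ q) (g ∘ₗ q) := by
  rw [conv, conv, comp_assoc, comp_assoc, hq, map_comp]
  simp only [comp_assoc]

lemma cOne_comp_counitMap (hq : (ε) ∘ₗ q = ε) :
    (cOne : H →ₗ[R] H) ∘ₗ q = cOne := by
  rw [cOne, comp_assoc, hq]

end ConvComp

section PhiMachinery

variable (Sinv : H →ₗ[R] H)

/-- The sequence `T_n` (clone of `qeT` over a general base). -/
noncomputable def TT : ℕ → (H →ₗ[R] H)
  | 0 => cOne
  | n + 1 => conv (TT n) ((Sinv ∘ₗ Sinv) ^ n)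

/-- The crossed-product operator `Φ(x) = id ⋆ (x ∘ S⁻²)`. -/
noncomputable def Phi : Module.End R (H →ₗ[R] H) where
  toFun x := conv .id (x ∘ₗ (Sinv ∘ₗ Sinv))
  map_add' x y := by simp only [add_comp, conv_add_right]
  map_smul' r x := by simp only [RingHom.id_apply, smul_comp, conv_smul_right]

/-- The inverse operator `Ψ(y) = (S ⋆ y) ∘ S²`. -/
noncomputable def Psi : Module.End R (H →ₗ[R] H) where
  toFun y := (conv (HopfAlgebra.antipode (R := R) (A := H)) y)
      ∘ₗ (HopfAlgebra.antipode (R := R) (A := H) ∘ₗ HopfAlgebra.antipode (R := R) (A := H))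
  map_add' x y := by simp only [conv_add_right, add_comp]
  map_smul' r x := by simp only [RingHom.id_apply, conv_smul_right, smul_comp]

variable (hS₁ : Sinv ∘ₗ HopfAlgebra.antipode (R := R) (A := H) = LinearMap.id)
  (hS₂ : HopfAlgebra.antipode (R := R) (A := H) ∘ₗ Sinv = LinearMap.id)

include hS₁ hS₂

lemma TT_succ (k : ℕ) :
    TT Sinv (k + 1) = (Phi Sinv) (TT Sinv k) := by
  induction k with
  | zero =>
      show conv (TT Sinv 0) ((Sinv ∘ₗ Sinv) ^ 0) = conv .id (TT Sinv 0 ∘ₗ (Sinv ∘ₗ Sinv))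
      show conv (cOne) ((Sinv ∘ₗ Sinv) ^ 0) = conv .id ((cOne : H →ₗ[R] H) ∘ₗ (Sinv ∘ₗ Sinv))
      rw [pow_zero, Module.End.one_eq_id, conv_cOne_left,
        cOne_comp_counitMap (counit_comp_sq (R := R) Sinv hS₁ hS₂), conv_cOne_right]
  | succ k ih =>
      show conv (TT Sinv (k+1)) ((Sinv ∘ₗ Sinv) ^ (k+1))
          = conv .id (TT Sinv (k+1) ∘ₗ (Sinv ∘ₗ Sinv))
      have hTT : TT Sinv (k+1) = conv (TT Sinv k) ((Sinv ∘ₗ Sinv) ^ k) := rfl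
      conv_rhs => rw [hTT]
      rw [conv_comp_coalgMap (comul_comp_sq (R := R) Sinv hS₁ hS₂), ← conv_assoc]
      have ihs : conv .id (TT Sinv k ∘ₗ (Sinv ∘ₗ Sinv)) = TT Sinv (k+1) := by
        rw [ih]; rfl
      rw [ihs]
      congr 1

lemma TT_eq_pow (k : ℕ) : TT Sinv k = ((Phi Sinv) ^ k) cOne := by
  induction k with
  | zero => rw [pow_zero]; rfl
  | succ k ih =>
      rw [TT_succ Sinv hS₁ hS₂, ih, pow_succ', Module.End.mul_apply]

lemma comp_sq_ssq : (Sinv ∘ₗ Sinv) ∘ₗ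
    (HopfAlgebra.antipode (R := R) (A := H) ∘ₗ HopfAlgebra.antipode (R := R) (A := H))
      = LinearMap.id := by
  ext z
  have h := fun w => LinearMap.congr_fun hS₁ w
  simp only [comp_apply, id_apply] at h ⊢
  rw [h, h]

lemma comp_ssq_sq : (HopfAlgebra.antipode (R := R) (A := H) ∘ₗ
      HopfAlgebra.antipode (R := R) (A := H)) ∘ₗ (Sinv ∘ₗ Sinv) = LinearMap.id := by
  ext z
  have h := fun w => LinearMap.congr_fun hS₂ w
  simp only [comp_apply, id_apply] at h ⊢
  rw [h, h]

lemma psi_phi (x : H →ₗ[R] H) : (Psi (R := R) (H := H)) ((Phi Sinv) x) = x := by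
  show (conv (HopfAlgebra.antipode (R := R) (A := H)) (conv .id (x ∘ₗ (Sinv ∘ₗ Sinv))))
      ∘ₗ (HopfAlgebra.antipode (R := R) (A := H) ∘ₗ HopfAlgebra.antipode (R := R) (A := H)) = x
  rw [← conv_assoc, conv_antipode_id, conv_cOne_left, comp_assoc,
    comp_sq_ssq Sinv hS₁ hS₂, comp_id]

lemma phi_psi (y : H →ₗ[R] H) : (Phi Sinv) ((Psi (R := R) (H := H)) y) = y := by
  show conv .id (((conv (HopfAlgebra.antipode (R := R) (A := H)) y)
      ∘ₗ (HopfAlgebra.antipode (R := R) (A := H) ∘ₗ HopfAlgebra.antipode (R := R) (A := H)))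
        ∘ₗ (Sinv ∘ₗ Sinv)) = y
  rw [comp_assoc, comp_ssq_sq Sinv hS₁ hS₂, comp_id, ← conv_assoc, conv_id_antipode,
    conv_cOne_left]

lemma isUnit_Phi : IsUnit (Phi Sinv) := by
  refine ⟨⟨Phi Sinv, Psi, ?_, ?_⟩, rfl⟩
  · apply LinearMap.ext
    intro y
    rw [Module.End.mul_apply, phi_psi Sinv hS₁ hS₂]
    rfl
  · apply LinearMap.ext
    intro x
    rw [Module.End.mul_apply, psi_phi Sinv hS₁ hS₂]
    rfl

omit hS₁ hS₂ in
lemma one_sub_pow_eq {A' : Type*} [Ring A'] [Algebra R A'] (a : A') (N : ℕ) :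
    (1 - a) ^ N = ∑ k ∈ Finset.range (N + 1), ((-1 : R) ^ k * (N.choose k : R)) • a ^ k := by
  have h := (Commute.one_right (-a)).add_pow N
  rw [neg_add_eq_sub] at h
  rw [h]
  apply Finset.sum_congr rfl
  intro k _
  rw [one_pow, mul_one, neg_pow, Algebra.smul_def, map_mul, map_pow, map_neg, map_one,
    map_natCast, mul_assoc, mul_assoc, ← (Nat.cast_commute (N.choose k) (a ^ k)).eq]

lemma sum_TT_eq (n N : ℕ) :
    ∑ k ∈ Finset.range (N + 1), ((-1 : R) ^ k * (N.choose k : R)) • TT Sinv (n * k)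
      = ((((1 : Module.End R (H →ₗ[R] H)) - (Phi Sinv) ^ n) ^ N)) cOne := by
  rw [one_sub_pow_eq (R := R) ((Phi Sinv) ^ n) N, LinearMap.sum_apply]
  apply Finset.sum_congr rfl
  intro k _
  rw [LinearMap.smul_apply, ← pow_mul, ← TT_eq_pow Sinv hS₁ hS₂]

end PhiMachinery

end Hopf2

section Closure

variable {R₀ M : Type*} [CommRing R₀] [AddCommGroup M] [Module R₀ M]

/-- `n` is such that `(Φⁿ - 1)` is "nilpotent at `v`". -/
def NilCond (Φ : Module.End R₀ M) (v : M) (n : ℕ) : Prop :=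
  ∃ N : ℕ, 0 < N ∧ (((1 : Module.End R₀ M) - Φ ^ n) ^ N) v = 0

variable {Φ : Module.End R₀ M} {v : M}

lemma nilcond_aux {X Y : Module.End R₀ M} (h : Commute X Y) {K L : ℕ}
    (hX : (X ^ K) v = 0) (hY : (Y ^ L) v = 0) : ((X + Y) ^ (K + L)) v = 0 := by
  rw [h.add_pow, LinearMap.sum_apply]
  apply Finset.sum_eq_zero
  intro k hk
  simp only [Finset.mem_range] at hk
  rcases le_or_gt k K with hkK | hkK
  · -- then K + L - k ≥ L, kill with Y
    have hexp : K + L - k = (K - k) + L := by omega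
    have : (X ^ k * Y ^ (K + L - k) * ((K + L).choose k : Module.End R₀ M)) v
        = (X ^ k) ((Y ^ (K - k)) ((Y ^ L) ((((K + L).choose k : ℕ) : Module.End R₀ M) v))) := by
      rw [hexp, pow_add]
      simp only [Module.End.mul_apply]
    rw [this, Module.End.natCast_apply, map_nsmul, hY, smul_zero, map_zero, map_zero]
  · -- k > K : kill with X, after commuting X^K to the inside
    have hXk : X ^ k = X ^ (k - K) * X ^ K := by
      rw [← pow_add]
      congr 1
      omega
    have hcomm : X ^ k * Y ^ (K + L - k) * ((K + L).choose k : Module.End R₀ M)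
        = X ^ (k - K) * Y ^ (K + L - k) * ((K + L).choose k : Module.End R₀ M) * X ^ K := by
      rw [hXk]
      have c1 : Commute (X ^ K) (Y ^ (K + L - k)) := (h.pow_pow _ _)
      have c2 : Commute (X ^ K) (((K + L).choose k : Module.End R₀ M)) :=
        (Nat.cast_commute _ _).symm
      calc X ^ (k - K) * X ^ K * Y ^ (K + L - k) * ((K + L).choose k : Module.End R₀ M)
          = X ^ (k - K) * (X ^ K * Y ^ (K + L - k)) * ((K + L).choose k : Module.End R₀ M) := by
            rw [mul_assoc (X ^ (k - K))]
        _ = X ^ (k - K) * (Y ^ (K + L - k) * X ^ K) * ((K + L).choose k : Module.End R₀ M) := by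
            rw [c1.eq]
        _ = X ^ (k - K) * Y ^ (K + L - k) * (X ^ K * ((K + L).choose k : Module.End R₀ M)) := by
            rw [mul_assoc, mul_assoc, mul_assoc]
        _ = X ^ (k - K) * Y ^ (K + L - k) * (((K + L).choose k : Module.End R₀ M) * X ^ K) := by
            rw [c2.eq]
        _ = X ^ (k - K) * Y ^ (K + L - k) * ((K + L).choose k : Module.End R₀ M) * X ^ K := by
            rw [mul_assoc (X ^ (k - K) * Y ^ (K + L - k))]
    rw [hcomm]
    simp only [Module.End.mul_apply]
    rw [hX, map_zero, map_zero, map_zero]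

lemma commute_one_sub_pow (a b : ℕ) : Commute ((1 : Module.End R₀ M) - Φ ^ a) (Φ ^ b) :=
  ((Commute.one_left (Φ ^ b)).sub_left ((Commute.refl Φ).pow_pow a b))

lemma nilCond_add {m n : ℕ} (hm : NilCond Φ v m) (hn : NilCond Φ v n) :
    NilCond Φ v (m + n) := by
  obtain ⟨K, hK, hXv⟩ := hm
  obtain ⟨L, hL, hYv⟩ := hn
  refine ⟨L + K, by omega, ?_⟩
  have key : (1 : Module.End R₀ M) - Φ ^ (m + n)
      = (Φ ^ m * ((1 : Module.End R₀ M) - Φ ^ n)) + ((1 : Module.End R₀ M) - Φ ^ m) := by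
    rw [mul_sub, mul_one, ← pow_add]
    abel
  rw [key]
  apply nilcond_aux
  · -- Commute (Φ^m * (1 - Φ^n)) (1 - Φ^m)
    exact ((commute_one_sub_pow m m).symm).mul_left
      ((Commute.one_left _).sub_left ((commute_one_sub_pow m n).symm))
  · -- ((Φ^m * (1-Φ^n))^L) v = 0
    have hc : Commute (Φ ^ m) ((1 : Module.End R₀ M) - Φ ^ n) := (commute_one_sub_pow n m).symm
    rw [hc.mul_pow, ← pow_mul, Module.End.mul_apply, hYv, map_zero]
  · exact hXv

lemma nilCond_sub {m n : ℕ} (hu : IsUnit Φ) (hm : NilCond Φ v m) (hn : NilCond Φ v n)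
    (hle : n ≤ m) : NilCond Φ v (m - n) := by
  obtain ⟨K, hK, hXv⟩ := hm
  obtain ⟨L, hL, hYv⟩ := hn
  refine ⟨K + L, by omega, ?_⟩
  -- Φ^n * (1 - Φ^(m-n)) = (1 - Φ^m) - (1 - Φ^n) =: X - Y
  have key : Φ ^ n * ((1 : Module.End R₀ M) - Φ ^ (m - n))
      = ((1 : Module.End R₀ M) - Φ ^ m) + (-((1 : Module.End R₀ M) - Φ ^ n)) := by
    rw [mul_sub, mul_one, ← pow_add, Nat.add_sub_cancel' hle]
    abel
  have hc : Commute (Φ ^ n) ((1 : Module.End R₀ M) - Φ ^ (m - n)) :=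
    (commute_one_sub_pow (m - n) n).symm
  have hzero : ((Φ ^ n * ((1 : Module.End R₀ M) - Φ ^ (m - n))) ^ (K + L)) v = 0 := by
    rw [key]
    apply nilcond_aux
    · have h1 : Commute ((1 : Module.End R₀ M) - Φ ^ m) ((1 : Module.End R₀ M) - Φ ^ n) :=
        (Commute.one_left _).sub_left (commute_one_sub_pow n m).symm
      exact h1.neg_right
    · exact hXv
    · rw [neg_pow, Module.End.mul_apply, hYv, map_zero]
  have hPhiw : (Φ ^ (n * (K + L)))
      ((((1 : Module.End R₀ M) - Φ ^ (m - n)) ^ (K + L)) v) = 0 := by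
    rw [pow_mul, ← Module.End.mul_apply, ← hc.mul_pow]
    exact hzero
  obtain ⟨U, hU⟩ := hu.pow (n * (K + L))
  calc (((1 : Module.End R₀ M) - Φ ^ (m - n)) ^ (K + L)) v
      = ((↑U⁻¹ * ↑U : Module.End R₀ M))
          ((((1 : Module.End R₀ M) - Φ ^ (m - n)) ^ (K + L)) v) := by
        rw [U.inv_mul, Module.End.one_apply]
    _ = (↑U⁻¹ : Module.End R₀ M)
          ((Φ ^ (n * (K + L))) ((((1 : Module.End R₀ M) - Φ ^ (m - n)) ^ (K + L)) v)) := by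
        rw [Module.End.mul_apply, hU]
    _ = 0 := by rw [hPhiw, map_zero]

lemma nilCond_mul {n : ℕ} (hn : NilCond Φ v n) {q : ℕ} (hq : 0 < q) : NilCond Φ v (n * q) := by
  induction q with
  | zero => omega
  | succ q ih =>
      rcases Nat.eq_zero_or_pos q with h0 | hq'
      · subst h0; simpa using hn
      · have h := nilCond_add (ih hq') hn
        rw [Nat.mul_succ]
        exact h

end Closure


section Bridge

variable {H : Type*} [Ring H] [HopfAlgebra ℂ H]

lemma qeT_eq_TT (Sinv : H →ₗ[ℂ] H) : ∀ k, qeT H Sinv k = TT Sinv k := by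
  intro k
  induction k with
  | zero => rfl
  | succ k ih =>
      show LinearMap.mul' ℂ H ∘ₗ TensorProduct.map (qeT H Sinv k) ((Sinv ∘ₗ Sinv) ^ k)
          ∘ₗ Coalgebra.comul = conv (TT Sinv k) ((Sinv ∘ₗ Sinv) ^ k)
      rw [ih]
      rfl

variable (Sinv : H →ₗ[ℂ] H)
  (hS₁ : Sinv ∘ₗ HopfAlgebra.antipode (R := ℂ) (A := H) = LinearMap.id)
  (hS₂ : HopfAlgebra.antipode (R := ℂ) (A := H) ∘ₗ Sinv = LinearMap.id)

include hS₁ hS₂ in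
lemma qexpCond_iff_nilCond (n : ℕ) :
    qexpCond H Sinv n ↔ NilCond (Phi Sinv) (cOne : H →ₗ[ℂ] H) n := by
  have hx : ∀ N : ℕ,
      ∑ k ∈ Finset.range (N + 1), ((-1 : ℂ) ^ k * (N.choose k : ℂ)) • qeT H Sinv (n * k)
        = ((((1 : Module.End ℂ (H →ₗ[ℂ] H)) - (Phi Sinv) ^ n) ^ N)) cOne := by
    intro N
    have : ∀ k, qeT H Sinv (n * k) = TT Sinv (n * k) := fun k => qeT_eq_TT Sinv _
    simp only [this]
    exact sum_TT_eq Sinv hS₁ hS₂ n N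
  unfold qexpCond NilCond
  exact exists_congr fun N => and_congr_right fun _ => by rw [hx N]

end Bridge

section Transfer

variable {H H' : Type*} [Ring H] [HopfAlgebra ℂ H] [Ring H'] [HopfAlgebra ℂ H']
  (f : H' →ₐc[ℂ] H)

local notation "fL" => (f : H' →ₗ[ℂ] H)

lemma fL_apply (y : H') : (fL) y = f y := rfl

lemma hf_mul : LinearMap.mul' ℂ H ∘ₗ map fL fL = fL ∘ₗ LinearMap.mul' ℂ H' := by
  apply TensorProduct.ext'
  intro x y
  simp [LinearMap.mul'_apply]

lemma f_antipode :
    HopfAlgebra.antipode (R := ℂ) (A := H) ∘ₗ fL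
      = fL ∘ₗ HopfAlgebra.antipode (R := ℂ) (A := H') := by
  have h1 : conv (HopfAlgebra.antipode (R := ℂ) (A := H) ∘ₗ fL) fL = cOne := by
    ext x
    simp only [conv, cOne, comp_apply]
    have e1 : map (HopfAlgebra.antipode (R := ℂ) (A := H) ∘ₗ fL) fL
        = map (HopfAlgebra.antipode (R := ℂ) (A := H)) (.id : H →ₗ[ℂ] H)
            ∘ₗ map fL fL := by
      rw [← map_comp, id_comp]
    rw [e1]
    have e2 : map fL fL (Coalgebra.comul x) = Coalgebra.comul (f x) := by
      have := LinearMap.congr_fun (CoalgHomClass.map_comp_comul f) x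
      simp only [comp_apply] at this; exact this
    simp only [comp_apply]
    rw [e2]
    have e3 := HopfAlgebra.mul_antipode_rTensor_comul_apply (R := ℂ) (a := f x)
    have : (map (HopfAlgebra.antipode (R := ℂ) (A := H)) (.id : H →ₗ[ℂ] H))
        (Coalgebra.comul (f x))
        = (HopfAlgebra.antipode (R := ℂ) (A := H)).rTensor H (Coalgebra.comul (f x)) := rfl
    rw [this, e3, CoalgHomClass.counit_comp_apply]
    simp [Algebra.linearMap_apply]
  have h2 : conv fL (fL ∘ₗ HopfAlgebra.antipode (R := ℂ) (A := H')) = cOne := by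
    ext x
    simp only [conv, cOne, comp_apply]
    have e1 : map fL (fL ∘ₗ HopfAlgebra.antipode (R := ℂ) (A := H'))
        = map fL fL ∘ₗ map (.id : H' →ₗ[ℂ] H') (HopfAlgebra.antipode (R := ℂ) (A := H')) := by
      rw [← map_comp, comp_id]
    rw [e1]
    simp only [comp_apply]
    have e2 := LinearMap.congr_fun (hf_mul f)
      ((map (.id : H' →ₗ[ℂ] H') (HopfAlgebra.antipode (R := ℂ) (A := H')))
        (Coalgebra.comul x))
    simp only [comp_apply] at e2
    rw [e2]
    have e3 := HopfAlgebra.mul_antipode_lTensor_comul_apply (R := ℂ) (a := x)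
    have : (map (.id : H' →ₗ[ℂ] H') (HopfAlgebra.antipode (R := ℂ) (A := H')))
        (Coalgebra.comul x)
        = (HopfAlgebra.antipode (R := ℂ) (A := H')).lTensor H' (Coalgebra.comul x) := rfl
    rw [this, e3]
    simp [Algebra.algebraMap_eq_smul_one]
  exact conv_unique h1 h2

variable (Sinv : H →ₗ[ℂ] H)
  (hS₁ : Sinv ∘ₗ HopfAlgebra.antipode (R := ℂ) (A := H) = LinearMap.id)
  (hS₂ : HopfAlgebra.antipode (R := ℂ) (A := H) ∘ₗ Sinv = LinearMap.id)
  (Sinv' : H' →ₗ[ℂ] H')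
  (hS₁' : Sinv' ∘ₗ HopfAlgebra.antipode (R := ℂ) (A := H') = LinearMap.id)
  (hS₂' : HopfAlgebra.antipode (R := ℂ) (A := H') ∘ₗ Sinv' = LinearMap.id)

include hS₁ hS₂' in
lemma f_sinv : fL ∘ₗ Sinv' = Sinv ∘ₗ fL := by
  ext x
  simp only [comp_apply]
  have hfS := fun y => LinearMap.congr_fun (f_antipode f) y
  simp only [comp_apply, fL_apply] at hfS
  have h2' : ∀ y : H', HopfAlgebra.antipode (R := ℂ) (A := H') (Sinv' y) = y :=
    fun y => by simpa using LinearMap.congr_fun hS₂' y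
  have h1 : ∀ y : H, Sinv (HopfAlgebra.antipode (R := ℂ) (A := H) y) = y :=
    fun y => by simpa using LinearMap.congr_fun hS₁ y
  rw [fL_apply, fL_apply]
  calc f (Sinv' x)
      = Sinv (HopfAlgebra.antipode (R := ℂ) (A := H) (f (Sinv' x))) := (h1 _).symm
    _ = Sinv (f (HopfAlgebra.antipode (R := ℂ) (A := H') (Sinv' x))) := by rw [hfS]
    _ = Sinv (f x) := by rw [h2']

include hS₁ hS₂' in
lemma f_sq_pow : ∀ k : ℕ, fL ∘ₗ ((Sinv' ∘ₗ Sinv') ^ k) = ((Sinv ∘ₗ Sinv) ^ k) ∘ₗ fL := by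
  intro k
  have hfs := fun y => LinearMap.congr_fun (f_sinv f Sinv hS₁ Sinv' hS₂') y
  simp only [comp_apply, fL_apply] at hfs
  induction k with
  | zero => simp [Module.End.one_eq_id]
  | succ k ih =>
      rw [pow_succ, pow_succ, Module.End.mul_eq_comp, Module.End.mul_eq_comp]
      ext x
      simp only [comp_apply, fL_apply]
      have ihx := fun y => LinearMap.congr_fun ih y
      simp only [comp_apply, fL_apply] at ihx
      rw [ihx, hfs, hfs]

include hS₁ hS₂' in
lemma f_qeT : ∀ k : ℕ, fL ∘ₗ qeT H' Sinv' k = qeT H Sinv k ∘ₗ fL := by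
  intro k
  induction k with
  | zero =>
      ext x
      simp only [qeT, comp_apply, Algebra.linearMap_apply, fL_apply]
      rw [AlgHomClass.commutes]
      rw [show Coalgebra.counit (f x) = (Coalgebra.counit x : ℂ) from
        CoalgHomClass.counit_comp_apply f x]
  | succ k ih =>
      ext x
      simp only [qeT, comp_apply, fL_apply]
      have e2 := LinearMap.congr_fun (hf_mul f)
        ((map (qeT H' Sinv' k) ((Sinv' ∘ₗ Sinv') ^ k)) (Coalgebra.comul x))
      simp only [comp_apply, fL_apply] at e2
      rw [← e2]
      have e3 : (map fL fL) ((map (qeT H' Sinv' k) ((Sinv' ∘ₗ Sinv') ^ k))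
          (Coalgebra.comul x))
          = (map (qeT H Sinv k) ((Sinv ∘ₗ Sinv) ^ k)) ((map fL fL) (Coalgebra.comul x)) := by
        rw [← comp_apply, ← map_comp, ih, f_sq_pow f Sinv hS₁ Sinv' hS₂' k, map_comp,
          comp_apply]
      rw [e3]
      have e4 : map fL fL (Coalgebra.comul x) = Coalgebra.comul (f x) := by
        have := LinearMap.congr_fun (CoalgHomClass.map_comp_comul f) x
        simp only [comp_apply] at this; exact this
      rw [e4]

include hS₁ hS₂' in
lemma qexpCond_transfer (hf : Function.Injective f) (n : ℕ)
    (h : qexpCond H Sinv n) : qexpCond H' Sinv' n := by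
  obtain ⟨N, hN, hsum⟩ := h
  refine ⟨N, hN, ?_⟩
  ext x
  apply hf
  rw [LinearMap.zero_apply, map_zero]
  have key : f ((∑ k ∈ Finset.range (N + 1),
      ((-1 : ℂ) ^ k * (N.choose k : ℂ)) • qeT H' Sinv' (n * k)) x)
      = (∑ k ∈ Finset.range (N + 1),
          ((-1 : ℂ) ^ k * (N.choose k : ℂ)) • qeT H Sinv (n * k)) (f x) := by
    rw [LinearMap.sum_apply, LinearMap.sum_apply, map_sum]
    apply Finset.sum_congr rfl
    intro k _
    rw [LinearMap.smul_apply, LinearMap.smul_apply, map_smul]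
    congr 1
    have := LinearMap.congr_fun (f_qeT f Sinv hS₁ Sinv' hS₂' (n * k)) x
    simpa only [comp_apply, fL_apply] using this
  rw [key, hsum]
  rfl

end Transfer

end QexpAux

open QexpAux in
/-- If `H'` is a Hopf subalgebra of a finite-dimensional Hopf algebra `H` over `ℂ` (with
bijective antipodes), i.e. there is an injective bialgebra homomorphism `f : H' → H`, then
every positive integer satisfying the quasi-exponent condition for `H` also satisfies it
for `H'`; in particular `qexp H'` divides `qexp H`. -/
theorem qexpCond_of_hopfSubalgebra (H H' : Type*) [Ring H] [HopfAlgebra ℂ H]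
    [FiniteDimensional ℂ H] [Ring H'] [HopfAlgebra ℂ H'] [FiniteDimensional ℂ H']
    (Sinv : H →ₗ[ℂ] H)
    (hS₁ : Sinv ∘ₗ HopfAlgebra.antipode (R := ℂ) (A := H) = LinearMap.id)
    (hS₂ : HopfAlgebra.antipode (R := ℂ) (A := H) ∘ₗ Sinv = LinearMap.id)
    (Sinv' : H' →ₗ[ℂ] H')
    (hS₁' : Sinv' ∘ₗ HopfAlgebra.antipode (R := ℂ) (A := H') = LinearMap.id)
    (hS₂' : HopfAlgebra.antipode (R := ℂ) (A := H') ∘ₗ Sinv' = LinearMap.id)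
    (f : H' →ₐc[ℂ] H) (hf : Function.Injective f) :
    (∀ n : ℕ, 0 < n → qexpCond H Sinv n → qexpCond H' Sinv' n) ∧
      sInf {m : ℕ | 0 < m ∧ qexpCond H' Sinv' m} ∣
        sInf {m : ℕ | 0 < m ∧ qexpCond H Sinv m} := by
  have part1 : ∀ n : ℕ, qexpCond H Sinv n → qexpCond H' Sinv' n :=
    fun n h => qexpCond_transfer f Sinv hS₁ Sinv' hS₂' hf n h
  refine ⟨fun n _ h => part1 n h, ?_⟩
  set A : Set ℕ := {m : ℕ | 0 < m ∧ qexpCond H Sinv m} with hA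
  set B : Set ℕ := {m : ℕ | 0 < m ∧ qexpCond H' Sinv' m} with hB
  by_cases hAne : A.Nonempty
  · obtain ⟨ha0, haq⟩ := Nat.sInf_mem hAne
    set a := sInf A with hadef
    have haB : a ∈ B := ⟨ha0, part1 a haq⟩
    have hBne : B.Nonempty := ⟨a, haB⟩
    obtain ⟨hd0, hdq⟩ := Nat.sInf_mem hBne
    set d := sInf B with hddef
    -- translate to NilCond for H'
    have hiff : ∀ m : ℕ, qexpCond H' Sinv' m ↔
        NilCond (Phi Sinv') (cOne : H' →ₗ[ℂ] H') m :=
      fun m => qexpCond_iff_nilCond Sinv' hS₁' hS₂' m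
    have hu : IsUnit (Phi Sinv') := isUnit_Phi Sinv' hS₁' hS₂'
    have hda : d ≤ a := Nat.sInf_le haB
    have hcond_a : NilCond (Phi Sinv') (cOne : H' →ₗ[ℂ] H') a := (hiff a).mp haB.2
    have hcond_d : NilCond (Phi Sinv') (cOne : H' →ₗ[ℂ] H') d := (hiff d).mp hdq
    set q := a / d with hq
    set r := a % d with hr
    have hq1 : 0 < q := Nat.one_le_div_iff hd0 |>.mpr hda
    have hcond_dq : NilCond (Phi Sinv') (cOne : H' →ₗ[ℂ] H') (d * q) :=
      nilCond_mul hcond_d hq1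
    have hdqa : d * q ≤ a := by
      rw [hq]
      exact Nat.mul_div_le a d
    have hsub : NilCond (Phi Sinv') (cOne : H' →ₗ[ℂ] H') (a - d * q) :=
      nilCond_sub hu hcond_a hcond_dq hdqa
    have hrsub : a - d * q = r := by
      have h1 : d * q + r = a := Nat.div_add_mod a d
      omega
    rw [hrsub] at hsub
    rcases Nat.eq_zero_or_pos r with hr0 | hrpos
    · exact Nat.dvd_of_mod_eq_zero hr0
    · exfalso
      have hrB : r ∈ B := ⟨hrpos, (hiff r).mpr hsub⟩
      have : d ≤ r := Nat.sInf_le hrB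
      have : r < d := Nat.mod_lt a hd0
      omega
  · rw [Set.not_nonempty_iff_eq_empty] at hAne
    rw [hAne, Nat.sInf_empty]
    exact dvd_zero _
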